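/- Let {V_k}, {U_k}, {S_k} be nonnegative real sequences, {μ_k}, {ν_k}, {ω_k} nonnegative, and {τ_k} integers with 0 ≤ τ_k ≤ τ for a fixed τ ≥ 1. Suppose V_{k+1} ≤ V_k - U_k + μ_k ∑_{l=max(k-τ_k+1,0)}^{k} S_l - ν_k S_k + ω_k for all k ≥ 0, and ∑_{l=0}^{τ-1} μ_{k+l} ≤ ν_k for all k. Then for every K, ∑_{k=0}^{K} U_k ≤ V_0 + ∑_{k=0}^{K} ω_k and V_{K+1} ≤ V_0 + ∑_{k=0}^{K} ω_k. -/
import Mathlib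


open Finset

theorem delayed_recursion_partial_sum_bounds
    (V U S μ ν ω : ℕ → ℝ) (τk : ℕ → ℕ) (τ : ℕ) (hτ : 1 ≤ τ)
    (hV : ∀ k, 0 ≤ V k) (hU : ∀ k, 0 ≤ U k) (hS : ∀ k, 0 ≤ S k)
    (hμ : ∀ k, 0 ≤ μ k) (hν : ∀ k, 0 ≤ ν k) (hω : ∀ k, 0 ≤ ω k)
    (hτk : ∀ k, τk k ≤ τ)
    (hrec : ∀ k, V (k+1) ≤ V k - U k + μ k * (∑ l ∈ Finset.Icc (k + 1 - τk k) k, S l)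
        - ν k * S k + ω k)
    (hcouple : ∀ k, (∑ l ∈ Finset.range τ, μ (k + l)) ≤ ν k) :
    ∀ K : ℕ, (∑ k ∈ Finset.range (K+1), U k) ≤ V 0 + (∑ k ∈ Finset.range (K+1), ω k) ∧
      V (K+1) ≤ V 0 + (∑ k ∈ Finset.range (K+1), ω k) := by
  intro K
  set N := K + 1 with hN
  -- key exchange inequality
  have key : (∑ k ∈ Finset.range N, μ k * (∑ l ∈ Finset.Icc (k + 1 - τk k) k, S l))
      ≤ ∑ l ∈ Finset.range N, ν l * S l := by
    have step1 : (∑ k ∈ Finset.range N, μ k * (∑ l ∈ Finset.Icc (k + 1 - τk k) k, S l))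
        ≤ ∑ k ∈ Finset.range N, ∑ l ∈ Finset.range N,
            (if k + 1 - τ ≤ l ∧ l ≤ k then μ k * S l else 0) := by
      apply Finset.sum_le_sum
      intro k hk
      rw [Finset.mul_sum]
      have hsub : Finset.Icc (k + 1 - τk k) k ⊆
          (Finset.range N).filter (fun l => k + 1 - τ ≤ l ∧ l ≤ k) := by
        intro l hl
        simp only [Finset.mem_Icc] at hl
        simp only [Finset.mem_filter, Finset.mem_range]
        have hkN : k < N := Finset.mem_range.mp hk
        refine ⟨lt_of_le_of_lt hl.2 hkN, le_trans (Nat.sub_le_sub_left (hτk k) _) hl.1, hl.2⟩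
      calc (∑ l ∈ Finset.Icc (k + 1 - τk k) k, μ k * S l)
          ≤ ∑ l ∈ (Finset.range N).filter (fun l => k + 1 - τ ≤ l ∧ l ≤ k), μ k * S l := by
            apply Finset.sum_le_sum_of_subset_of_nonneg hsub
            intro i _ _
            exact mul_nonneg (hμ k) (hS i)
        _ = ∑ l ∈ Finset.range N, (if k + 1 - τ ≤ l ∧ l ≤ k then μ k * S l else 0) := by
            rw [Finset.sum_filter]
    have step2 : (∑ k ∈ Finset.range N, ∑ l ∈ Finset.range N,
            (if k + 1 - τ ≤ l ∧ l ≤ k then μ k * S l else 0))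
        = ∑ l ∈ Finset.range N, ∑ k ∈ Finset.range N,
            (if k + 1 - τ ≤ l ∧ l ≤ k then μ k * S l else 0) := Finset.sum_comm
    have step3 : ∀ l, (∑ k ∈ Finset.range N, (if k + 1 - τ ≤ l ∧ l ≤ k then μ k * S l else 0))
        ≤ ν l * S l := by
      intro l
      have hfil : (∑ k ∈ Finset.range N, (if k + 1 - τ ≤ l ∧ l ≤ k then μ k * S l else 0))
          = ∑ k ∈ (Finset.range N).filter (fun k => k + 1 - τ ≤ l ∧ l ≤ k), μ k * S l := by
        rw [Finset.sum_filter]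
      have hsub2 : (Finset.range N).filter (fun k => k + 1 - τ ≤ l ∧ l ≤ k) ⊆
          Finset.Icc l (l + τ - 1) := by
        intro k hk
        simp only [Finset.mem_filter] at hk
        simp only [Finset.mem_Icc]
        refine ⟨hk.2.2, ?_⟩
        have h1 : k + 1 ≤ l + τ := by omega
        omega
      calc (∑ k ∈ Finset.range N, (if k + 1 - τ ≤ l ∧ l ≤ k then μ k * S l else 0))
          = ∑ k ∈ (Finset.range N).filter (fun k => k + 1 - τ ≤ l ∧ l ≤ k), μ k * S l := hfil
        _ ≤ ∑ k ∈ Finset.Icc l (l + τ - 1), μ k * S l := by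
            apply Finset.sum_le_sum_of_subset_of_nonneg hsub2
            intro i _ _
            exact mul_nonneg (hμ i) (hS l)
        _ = (∑ k ∈ Finset.Icc l (l + τ - 1), μ k) * S l := by rw [Finset.sum_mul]
        _ = (∑ j ∈ Finset.range τ, μ (l + j)) * S l := by
            congr 1
            have : Finset.Icc l (l + τ - 1) = Finset.Ico l (l + τ) := by
              ext x; simp only [Finset.mem_Icc, Finset.mem_Ico]; omega
            rw [this, Finset.sum_Ico_eq_sum_range]
            simp
        _ ≤ ν l * S l := mul_le_mul_of_nonneg_right (hcouple l) (hS l)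
    calc (∑ k ∈ Finset.range N, μ k * (∑ l ∈ Finset.Icc (k + 1 - τk k) k, S l))
        ≤ ∑ l ∈ Finset.range N, ∑ k ∈ Finset.range N,
            (if k + 1 - τ ≤ l ∧ l ≤ k then μ k * S l else 0) := step1.trans (le_of_eq step2)
      _ ≤ ∑ l ∈ Finset.range N, ν l * S l := Finset.sum_le_sum (fun l _ => step3 l)
  -- telescoping sum of the recursion
  have tele : V N - V 0 = ∑ k ∈ Finset.range N, (V (k+1) - V k) :=
    (Finset.sum_range_sub V N).symm
  have hsum : V N - V 0 ≤
      -(∑ k ∈ Finset.range N, U k)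
      + (∑ k ∈ Finset.range N, μ k * (∑ l ∈ Finset.Icc (k + 1 - τk k) k, S l))
      - (∑ k ∈ Finset.range N, ν k * S k)
      + (∑ k ∈ Finset.range N, ω k) := by
    rw [tele]
    have := Finset.sum_le_sum (fun k (_ : k ∈ Finset.range N) =>
      (by linarith [hrec k] :
        V (k+1) - V k ≤ -U k + μ k * (∑ l ∈ Finset.Icc (k + 1 - τk k) k, S l)
          - ν k * S k + ω k))
    simpa [Finset.sum_add_distrib, Finset.sum_sub_distrib, Finset.sum_neg_distrib] using this
  have main : V N + (∑ k ∈ Finset.range N, U k) ≤ V 0 + ∑ k ∈ Finset.range N, ω k := by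
    linarith [key]
  have hUnn : 0 ≤ ∑ k ∈ Finset.range N, U k :=
    Finset.sum_nonneg (fun k _ => hU k)
  exact ⟨by linarith [hV N], by linarith⟩
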